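/- arXiv:2010.14555 — 2 statements merged into one kernel-verified Lean document; each statement's English description precedes it below -/
import Mathlib

section
/- Under the setup of the previous statement, define τ_i = Y_i(1) − Y_i(0), ξ_i = b_i(1) − b_i(0), S_τ² = (1/(N−1)) Σ_i (τ_i − τ̄)² with τ̄ the mean of τ_i, and S_ξ² = (1/(N−1)) Σ_i (ξ_i − ξ̄)² with ξ̄ = 0. Then S_ξ² = S_τ² − ‖γ₁ − γ₀‖², and in particular S_ξ² ≤ S_τ². -/
open Matrix

private lemma mySum_dotProduct {N J : ℕ} (f : Fin N → Fin J → ℝ) (v : Fin J → ℝ) :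
    (∑ i, f i) ⬝ᵥ v = ∑ i, f i ⬝ᵥ v := by
  simp only [dotProduct, Finset.sum_apply, Finset.sum_mul]
  exact Finset.sum_comm

private lemma myDotProduct_sum {N J : ℕ} (v : Fin J → ℝ) (f : Fin N → Fin J → ℝ) :
    v ⬝ᵥ (∑ i, f i) = ∑ i, v ⬝ᵥ f i := by
  simp only [dotProduct, Finset.sum_apply, Finset.mul_sum]
  exact Finset.sum_comm

private lemma mySum_mulVec {N J : ℕ} (M : Fin N → Matrix (Fin J) (Fin J) ℝ) (v : Fin J → ℝ) :
    (∑ i, M i) *ᵥ v = ∑ i, M i *ᵥ v := by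
  funext k
  simp only [Matrix.mulVec, dotProduct, Finset.sum_apply, Matrix.sum_apply,
    Finset.sum_mul]
  exact Finset.sum_comm

private lemma myVecMulVec_mulVec {J : ℕ} (u v w : Fin J → ℝ) :
    Matrix.vecMulVec u v *ᵥ w = (v ⬝ᵥ w) • u := by
  funext k
  simp only [Matrix.mulVec, Matrix.vecMulVec_apply, dotProduct, Pi.smul_apply,
    smul_eq_mul, Finset.sum_mul]
  exact Finset.sum_congr rfl fun j _ => by ring

private lemma myDotProduct_self_nonneg {J : ℕ} (v : Fin J → ℝ) : (0:ℝ) ≤ v ⬝ᵥ v :=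
  Finset.sum_nonneg fun i _ => mul_self_nonneg _


theorem stmt4 (N J : ℕ) (hN : 2 ≤ N)
    (Y : Fin 2 → Fin N → ℝ) (x : Fin N → Fin J → ℝ)
    (hxc : ∑ i, x i = 0)
    (hxs : ((N : ℝ) - 1)⁻¹ • ∑ i, vecMulVec (x i) (x i) = (1 : Matrix (Fin J) (Fin J) ℝ))
    (γ : Fin 2 → Fin J → ℝ)
    (hγ : ∀ z, γ z = ((N : ℝ) - 1)⁻¹ • ∑ i, Y z i • x i)
    (Ybar : Fin 2 → ℝ) (hYbar : ∀ z, Ybar z = (N : ℝ)⁻¹ * ∑ i, Y z i)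
    (b : Fin 2 → Fin N → ℝ)
    (hb : ∀ z i, b z i = Y z i - Ybar z - x i ⬝ᵥ γ z)
    (τ ξ : Fin N → ℝ)
    (hτ : ∀ i, τ i = Y 1 i - Y 0 i) (hξ : ∀ i, ξ i = b 1 i - b 0 i)
    (τbar ξbar Sτ Sξ : ℝ)
    (hτbar : τbar = (N : ℝ)⁻¹ * ∑ i, τ i)
    (hξbar : ξbar = (N : ℝ)⁻¹ * ∑ i, ξ i)
    (hSτ : Sτ = ((N : ℝ) - 1)⁻¹ * ∑ i, (τ i - τbar) ^ 2)
    (hSξ : Sξ = ((N : ℝ) - 1)⁻¹ * ∑ i, (ξ i - ξbar) ^ 2) :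
    ξbar = 0 ∧ Sξ = Sτ - (γ 1 - γ 0) ⬝ᵥ (γ 1 - γ 0) ∧ Sξ ≤ Sτ := by
  have hN0 : (N : ℝ) ≠ 0 := by positivity
  have hN2 : (2 : ℝ) ≤ (N : ℝ) := by exact_mod_cast hN
  have hN1 : (N : ℝ) - 1 ≠ 0 := by nlinarith
  set δ : Fin J → ℝ := γ 1 - γ 0 with hδ
  -- mean of τ equals Ybar 1 - Ybar 0
  have hτbar' : τbar = Ybar 1 - Ybar 0 := by
    rw [hτbar, hYbar, hYbar]
    simp only [hτ]
    rw [Finset.sum_sub_distrib]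
    ring
  -- key pointwise formula for ξ
  have hξ' : ∀ i, ξ i = (τ i - τbar) - x i ⬝ᵥ δ := by
    intro i
    rw [hξ, hb, hb, hτ i, hτbar', hδ, dotProduct_sub]
    ring
  -- sum of x i ⬝ᵥ δ vanishes
  have hxδ : ∑ i, x i ⬝ᵥ δ = 0 := by
    rw [← mySum_dotProduct, hxc, zero_dotProduct]
  -- sum of centered τ vanishes
  have hτc : ∑ i, (τ i - τbar) = 0 := by
    rw [Finset.sum_sub_distrib, Finset.sum_const, Finset.card_fin, nsmul_eq_mul, hτbar]
    field_simp
    ring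
  -- ξbar = 0
  have hξbar0 : ξbar = 0 := by
    rw [hξbar]
    have : ∑ i, ξ i = 0 := by
      calc ∑ i, ξ i = ∑ i, ((τ i - τbar) - x i ⬝ᵥ δ) := by
            exact Finset.sum_congr rfl fun i _ => hξ' i
        _ = (∑ i, (τ i - τbar)) - ∑ i, x i ⬝ᵥ δ := Finset.sum_sub_distrib _ _
        _ = 0 := by rw [hτc, hxδ]; ring
    rw [this]; ring
  -- sum of τ i • x i = (N-1) • δ
  have hsumτx : ∑ i, τ i • x i = ((N : ℝ) - 1) • δ := by
    have h1 : ∑ i, Y 1 i • x i = ((N : ℝ) - 1) • γ 1 := by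
      rw [hγ 1, smul_smul, mul_inv_cancel₀ hN1, one_smul]
    have h0 : ∑ i, Y 0 i • x i = ((N : ℝ) - 1) • γ 0 := by
      rw [hγ 0, smul_smul, mul_inv_cancel₀ hN1, one_smul]
    calc ∑ i, τ i • x i = ∑ i, (Y 1 i • x i - Y 0 i • x i) := by
          refine Finset.sum_congr rfl fun i _ => ?_
          rw [hτ i, sub_smul]
      _ = (∑ i, Y 1 i • x i) - ∑ i, Y 0 i • x i := Finset.sum_sub_distrib _ _
      _ = ((N : ℝ) - 1) • δ := by rw [h1, h0, hδ, smul_sub]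
  -- cross term
  have hcross : ∑ i, (τ i - τbar) * (x i ⬝ᵥ δ) = ((N : ℝ) - 1) * (δ ⬝ᵥ δ) := by
    calc ∑ i, (τ i - τbar) * (x i ⬝ᵥ δ)
        = (∑ i, τ i * (x i ⬝ᵥ δ)) - τbar * ∑ i, x i ⬝ᵥ δ := by
          rw [Finset.mul_sum, ← Finset.sum_sub_distrib]
          exact Finset.sum_congr rfl fun i _ => by ring
      _ = (∑ i, τ i • x i) ⬝ᵥ δ := by
          rw [hxδ, mul_zero, sub_zero, mySum_dotProduct]
          exact Finset.sum_congr rfl fun i _ => by rw [smul_dotProduct, smul_eq_mul]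
      _ = ((N : ℝ) - 1) * (δ ⬝ᵥ δ) := by rw [hsumτx, smul_dotProduct, smul_eq_mul]
  -- quadratic term
  have hquad : ∑ i, (x i ⬝ᵥ δ) ^ 2 = ((N : ℝ) - 1) * (δ ⬝ᵥ δ) := by
    have hsM : ∑ i, vecMulVec (x i) (x i) = ((N : ℝ) - 1) • (1 : Matrix (Fin J) (Fin J) ℝ) := by
      rw [← hxs, smul_smul, mul_inv_cancel₀ hN1, one_smul]
    have hmv : (∑ i, vecMulVec (x i) (x i)) *ᵥ δ = ∑ i, (x i ⬝ᵥ δ) • x i := by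
      rw [mySum_mulVec]
      exact Finset.sum_congr rfl fun i _ => myVecMulVec_mulVec _ _ _
    have h2 : δ ⬝ᵥ ((∑ i, vecMulVec (x i) (x i)) *ᵥ δ) = ∑ i, (x i ⬝ᵥ δ) ^ 2 := by
      rw [hmv, myDotProduct_sum]
      refine Finset.sum_congr rfl fun i _ => ?_
      rw [dotProduct_smul, smul_eq_mul, dotProduct_comm]
      ring
    rw [← h2, hsM, Matrix.smul_mulVec, Matrix.one_mulVec, dotProduct_smul, smul_eq_mul]
  -- main sum identity
  have hsum : ∑ i, (ξ i - ξbar) ^ 2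
      = (∑ i, (τ i - τbar) ^ 2) - ((N : ℝ) - 1) * (δ ⬝ᵥ δ) := by
    have : ∀ i, (ξ i - ξbar) ^ 2
        = (τ i - τbar) ^ 2 - 2 * ((τ i - τbar) * (x i ⬝ᵥ δ)) + (x i ⬝ᵥ δ) ^ 2 := by
      intro i
      rw [hξbar0, sub_zero, hξ' i]
      ring
    rw [Finset.sum_congr rfl fun i _ => this i, Finset.sum_add_distrib,
      Finset.sum_sub_distrib, ← Finset.mul_sum, hcross, hquad]
    ring
  have hδδ : (0 : ℝ) ≤ δ ⬝ᵥ δ := myDotProduct_self_nonneg δ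
  have hmain : Sξ = Sτ - δ ⬝ᵥ δ := by
    rw [hSξ, hSτ, hsum]
    field_simp
  exact ⟨hξbar0, hmain, by rw [hmain]; linarith⟩
end

section
/- Let u, v ∈ ℝ^N with means ū = (1/N)Σu_i, v̄ = (1/N)Σv_i and finite-population variances S_u² = (1/(N−1))Σ(u_i − ū)², S_v² = (1/(N−1))Σ(v_i − v̄)². Let π be a uniformly random permutation of {1,…,N}. Then E[(1/N) Σ_i u_i v_{π(i)}] = ū v̄ and Var[(1/N) Σ_i u_i v_{π(i)}] = (N−1)/N² · S_u² S_v². -/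
open Equiv Finset

lemma perm_sum_apply (n : ℕ) (f : Fin (n+1) → ℝ) (i : Fin (n+1)) :
    ∑ π : Equiv.Perm (Fin (n+1)), f (π i) = (Nat.factorial n : ℝ) * ∑ j, f j := by
  have h0 : ∑ π : Equiv.Perm (Fin (n+1)), f (π i)
      = ∑ π : Equiv.Perm (Fin (n+1)), f (π 0) := by
    rw [← Equiv.sum_comp (Equiv.mulRight (Equiv.swap (0 : Fin (n+1)) i))
      (fun π : Equiv.Perm (Fin (n+1)) => f (π 0))]
    simp [Equiv.Perm.mul_apply]
  rw [h0, ← Equiv.sum_comp (Equiv.Perm.decomposeFin).symm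
    (fun π : Equiv.Perm (Fin (n+1)) => f (π 0))]
  simp [Fintype.sum_prod_type, Equiv.Perm.decomposeFin_symm_apply_zero,
    Finset.card_univ, Fintype.card_perm, mul_comm, Finset.mul_sum]

lemma perm_sum_pair (n : ℕ) (f g : Fin (n+2) → ℝ) (i k : Fin (n+2)) (hik : i ≠ k) :
    ∑ π : Equiv.Perm (Fin (n+2)), f (π i) * g (π k)
      = (Nat.factorial n : ℝ) * ((∑ j, f j) * (∑ j, g j) - ∑ j, f j * g j) := by
  -- construct τ with τ 0 = i, τ 1 = k
  set s : Equiv.Perm (Fin (n+2)) := Equiv.swap 0 i with hs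
  have hk' : s k ≠ 0 := by
    simp only [hs, ne_eq]
    intro h
    apply hik
    have := congrArg (Equiv.swap (0 : Fin (n+2)) i) h
    simpa [Equiv.swap_apply_left] using this.symm
  set τ : Equiv.Perm (Fin (n+2)) := s * Equiv.swap 1 (s k) with hτ
  have hτ0 : τ 0 = i := by
    have h01 : (0 : Fin (n+2)) ≠ 1 := by simp [Fin.ext_iff]
    simp only [hτ, Equiv.Perm.mul_apply]
    rw [Equiv.swap_apply_of_ne_of_ne h01 (Ne.symm hk')]
    simp [hs, Equiv.swap_apply_left]
  have hτ1 : τ 1 = k := by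
    simp only [hτ, Equiv.Perm.mul_apply, Equiv.swap_apply_left]
    simp [hs]
  have h0 : ∑ π : Equiv.Perm (Fin (n+2)), f (π i) * g (π k)
      = ∑ π : Equiv.Perm (Fin (n+2)), f (π 0) * g (π 1) := by
    rw [← Equiv.sum_comp (Equiv.mulRight τ)
      (fun π : Equiv.Perm (Fin (n+2)) => f (π 0) * g (π 1))]
    simp [Equiv.Perm.mul_apply, hτ0, hτ1]
  rw [h0, ← Equiv.sum_comp (Equiv.Perm.decomposeFin).symm
    (fun π : Equiv.Perm (Fin (n+2)) => f (π 0) * g (π 1))]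
  have key : ∀ j : Fin (n+2), ∑ σ : Equiv.Perm (Fin (n+1)),
      g (Equiv.swap 0 j ((σ 0).succ)) = (Nat.factorial n : ℝ) * ((∑ m, g m) - g j) := by
    intro j
    rw [perm_sum_apply n (fun l => g (Equiv.swap 0 j l.succ)) 0]
    congr 1
    have h2 : ∑ m : Fin (n+2), g (Equiv.swap 0 j m)
        = g (Equiv.swap 0 j 0) + ∑ l : Fin (n+1), g (Equiv.swap 0 j l.succ) :=
      Fin.sum_univ_succ (fun m : Fin (n+2) => g (Equiv.swap 0 j m))
    have h3 : ∑ m : Fin (n+2), g (Equiv.swap 0 j m) = ∑ m, g m :=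
      Equiv.sum_comp (Equiv.swap 0 j) g
    rw [h3, Equiv.swap_apply_left] at h2
    linarith
  calc ∑ p : Fin (n+2) × Equiv.Perm (Fin (n+1)),
        f ((Equiv.Perm.decomposeFin.symm p) 0) * g ((Equiv.Perm.decomposeFin.symm p) 1)
      = ∑ j : Fin (n+2), ∑ σ : Equiv.Perm (Fin (n+1)),
          f j * g (Equiv.swap 0 j ((σ 0).succ)) := by
        rw [Fintype.sum_prod_type]
        simp [Equiv.Perm.decomposeFin_symm_apply_zero, Equiv.Perm.decomposeFin_symm_apply_one]
    _ = ∑ j : Fin (n+2), f j * ((Nat.factorial n : ℝ) * ((∑ m, g m) - g j)) := by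
        refine Finset.sum_congr rfl fun j _ => ?_
        rw [← Finset.mul_sum, key j]
    _ = (Nat.factorial n : ℝ) * ((∑ j, f j) * (∑ j, g j) - ∑ j, f j * g j) := by
        have h4 : ∀ j : Fin (n+2), f j * ((Nat.factorial n : ℝ) * ((∑ m, g m) - g j))
            = (Nat.factorial n : ℝ) * (∑ m, g m) * f j
              - (Nat.factorial n : ℝ) * (f j * g j) := fun j => by ring
        simp_rw [h4, Finset.sum_sub_distrib, ← Finset.mul_sum]
        ring

set_option maxHeartbeats 2000000 in
theorem stmt5 (N : ℕ) (hN : 2 ≤ N) (u v : Fin N → ℝ)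
    (ubar vbar Su Sv ET VarT : ℝ)
    (hubar : ubar = (N : ℝ)⁻¹ * ∑ i, u i) (hvbar : vbar = (N : ℝ)⁻¹ * ∑ i, v i)
    (hSu : Su = ((N : ℝ) - 1)⁻¹ * ∑ i, (u i - ubar) ^ 2)
    (hSv : Sv = ((N : ℝ) - 1)⁻¹ * ∑ i, (v i - vbar) ^ 2)
    (T : Equiv.Perm (Fin N) → ℝ)
    (hT : ∀ π, T π = (N : ℝ)⁻¹ * ∑ i, u i * v (π i))
    (hE : ET = (Fintype.card (Equiv.Perm (Fin N)) : ℝ)⁻¹ * ∑ π : Equiv.Perm (Fin N), T π)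
    (hV : VarT = (Fintype.card (Equiv.Perm (Fin N)) : ℝ)⁻¹
            * ∑ π : Equiv.Perm (Fin N), (T π - ET) ^ 2) :
    ET = ubar * vbar ∧ VarT = (((N : ℝ) - 1) / (N : ℝ) ^ 2) * (Su * Sv) := by
  obtain ⟨n, rfl⟩ : ∃ n, N = n + 2 := ⟨N - 2, by omega⟩
  have hNr : ((n + 2 : ℕ) : ℝ) = (n : ℝ) + 2 := by push_cast; ring
  have hNcard : (Fintype.card (Equiv.Perm (Fin (n+2))) : ℝ) = ((n+2).factorial : ℝ) := by
    simp [Fintype.card_perm]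
  have hfac2 : (((n+2).factorial : ℕ) : ℝ) = ((n:ℝ)+2) * (((n+1).factorial : ℕ) : ℝ) := by
    rw [Nat.factorial_succ]; push_cast; ring
  have hfac1 : (((n+1).factorial : ℕ) : ℝ) = ((n:ℝ)+1) * ((n.factorial : ℕ) : ℝ) := by
    rw [Nat.factorial_succ]; push_cast; ring
  have hfn : ((n.factorial : ℕ) : ℝ) ≠ 0 := Nat.cast_ne_zero.2 (Nat.factorial_ne_zero n)
  have hn2 : ((n:ℝ)+2) ≠ 0 := by positivity
  have hn1 : ((n:ℝ)+1) ≠ 0 := by positivity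
  -- first moment
  have hS1 : ∑ π : Equiv.Perm (Fin (n+2)), T π
      = ((n + 2 : ℕ) : ℝ)⁻¹ * ((((n+1).factorial : ℕ) : ℝ)
          * ((∑ i, u i) * (∑ j, v j))) := by
    simp_rw [hT]
    rw [← Finset.mul_sum, Finset.sum_comm]
    congr 1
    calc ∑ i, ∑ π : Equiv.Perm (Fin (n+2)), u i * v (π i)
        = ∑ i, u i * ((((n+1).factorial : ℕ) : ℝ) * ∑ j, v j) := by
          refine Finset.sum_congr rfl fun i _ => ?_
          rw [← Finset.mul_sum, perm_sum_apply (n+1) v i]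
      _ = (((n+1).factorial : ℕ) : ℝ) * ((∑ i, u i) * (∑ j, v j)) := by
          rw [← Finset.sum_mul]; ring
  have hET : ET = (∑ i, u i) * (∑ j, v j) / ((n:ℝ)+2)^2 := by
    rw [hE, hNcard, hS1, hfac2, hNr]
    field_simp
  have conj1 : ET = ubar * vbar := by
    rw [hET, hubar, hvbar, hNr]
    field_simp
  refine ⟨conj1, ?_⟩
  -- second moment
  have hvv : ∑ j, v j * v j = ∑ j, v j ^ 2 := by simp_rw [pow_two]
  have hS2 : ∑ π : Equiv.Perm (Fin (n+2)), (∑ i, u i * v (π i))^2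
      = (((n+1).factorial : ℕ) : ℝ) * ((∑ i, u i ^ 2) * (∑ j, v j ^ 2))
        + ((n.factorial : ℕ) : ℝ)
          * (((∑ i, u i)^2 - ∑ i, u i ^ 2) * ((∑ j, v j)^2 - ∑ j, v j ^ 2)) := by
    have step1 : ∀ π : Equiv.Perm (Fin (n+2)), (∑ i, u i * v (π i))^2
        = ∑ i, ∑ k, (u i * u k) * (v (π i) * v (π k)) := by
      intro π
      rw [sq, Finset.sum_mul_sum]
      exact Finset.sum_congr rfl fun i _ => Finset.sum_congr rfl fun k _ => by ring
    simp_rw [step1]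
    rw [Finset.sum_comm]
    have step2 : ∀ i : Fin (n+2),
        ∑ π : Equiv.Perm (Fin (n+2)), ∑ k, (u i * u k) * (v (π i) * v (π k))
        = ∑ k, (u i * u k) * (∑ π : Equiv.Perm (Fin (n+2)), v (π i) * v (π k)) := by
      intro i
      rw [Finset.sum_comm]
      exact Finset.sum_congr rfl fun k _ => (Finset.mul_sum _ _ _).symm
    simp_rw [step2]
    have hCik : ∀ i k : Fin (n+2), ∑ π : Equiv.Perm (Fin (n+2)), v (π i) * v (π k)
        = ((n.factorial : ℕ) : ℝ) * ((∑ j, v j)^2 - ∑ j, v j ^ 2)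
          + (if i = k then (((n+1).factorial : ℕ) : ℝ) * (∑ j, v j ^ 2)
              - ((n.factorial : ℕ) : ℝ) * ((∑ j, v j)^2 - ∑ j, v j ^ 2) else 0) := by
      intro i k
      by_cases h : i = k
      · subst h
        rw [if_pos rfl]
        have h5 : ∑ π : Equiv.Perm (Fin (n+2)), v (π i) * v (π i)
            = (((n+1).factorial : ℕ) : ℝ) * (∑ j, v j ^ 2) := by
          have h6 := perm_sum_apply (n+1) (fun j => v j ^ 2) i
          simp_rw [pow_two] at h6 ⊢
          exact h6
        rw [h5]; ring
      · rw [if_neg h, add_zero, perm_sum_pair n v v i k h, hvv, ← pow_two]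
    simp_rw [hCik, mul_add, Finset.sum_add_distrib, mul_ite, mul_zero,
      Finset.sum_ite_eq, Finset.mem_univ, if_true]
    have h7 : ∀ i : Fin (n+2), ∑ k, u i * u k
        * (((n.factorial : ℕ) : ℝ) * ((∑ j, v j)^2 - ∑ j, v j ^ 2))
        = u i * (∑ k, u k) * (((n.factorial : ℕ) : ℝ) * ((∑ j, v j)^2 - ∑ j, v j ^ 2)) := by
      intro i
      rw [← Finset.sum_mul, ← Finset.mul_sum]
    simp_rw [h7]
    rw [← Finset.sum_mul, ← Finset.sum_mul]
    have h8 : ∑ i, u i * u i = ∑ i, u i ^ 2 := by simp_rw [pow_two]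
    have h9 : ∑ i, (u i * u i
        * ((((n+1).factorial : ℕ) : ℝ) * (∑ j, v j ^ 2)
          - ((n.factorial : ℕ) : ℝ) * ((∑ j, v j)^2 - ∑ j, v j ^ 2)))
        = (∑ i, u i ^ 2) * ((((n+1).factorial : ℕ) : ℝ) * (∑ j, v j ^ 2)
          - ((n.factorial : ℕ) : ℝ) * ((∑ j, v j)^2 - ∑ j, v j ^ 2)) := by
      rw [← Finset.sum_mul, h8]
    rw [h9]
    ring
  -- assemble variance
  have hsumsq : ∑ π : Equiv.Perm (Fin (n+2)), (T π - ET)^2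
      = (((n + 2 : ℕ) : ℝ)⁻¹)^2 * (∑ π : Equiv.Perm (Fin (n+2)), (∑ i, u i * v (π i))^2)
        - 2 * ET * (∑ π : Equiv.Perm (Fin (n+2)), T π)
        + (((n+2).factorial : ℕ) : ℝ) * ET^2 := by
    have e1 : ∀ π : Equiv.Perm (Fin (n+2)), (T π - ET)^2
        = (((n + 2 : ℕ) : ℝ)⁻¹)^2 * (∑ i, u i * v (π i))^2
          - 2 * ET * T π + ET^2 := by
      intro π
      rw [hT π]; ring
    simp_rw [e1, Finset.sum_add_distrib, Finset.sum_sub_distrib, ← Finset.mul_sum,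
      Finset.sum_const, Finset.card_univ, nsmul_eq_mul]
    rw [show ((Fintype.card (Equiv.Perm (Fin (n+2))) : ℕ) : ℝ)
      = (((n+2).factorial : ℕ) : ℝ) from hNcard]
  have hsu : ∑ i, (u i - ubar)^2 = (∑ i, u i ^ 2) - (∑ i, u i)^2/((n:ℝ)+2) := by
    have e1 : ∀ i : Fin (n+2), (u i - ubar)^2 = u i^2 - 2*ubar*u i + ubar^2 := fun i => by ring
    simp_rw [e1, Finset.sum_add_distrib, Finset.sum_sub_distrib, ← Finset.mul_sum,
      Finset.sum_const, Finset.card_univ, Fintype.card_fin, nsmul_eq_mul]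
    rw [hubar, hNr]
    push_cast
    field_simp
    ring
  have hsv : ∑ i, (v i - vbar)^2 = (∑ j, v j ^ 2) - (∑ j, v j)^2/((n:ℝ)+2) := by
    have e1 : ∀ i : Fin (n+2), (v i - vbar)^2 = v i^2 - 2*vbar*v i + vbar^2 := fun i => by ring
    simp_rw [e1, Finset.sum_add_distrib, Finset.sum_sub_distrib, ← Finset.mul_sum,
      Finset.sum_const, Finset.card_univ, Fintype.card_fin, nsmul_eq_mul]
    rw [hvbar, hNr]
    push_cast
    field_simp
    ring
  rw [hV, hNcard, hsumsq, hS2, hS1, hET, hSu, hSv, hsu, hsv, hfac2, hfac1]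
  push_cast
  rw [show (n:ℝ) + 2 - 1 = (n:ℝ) + 1 from by ring]
  field_simp
  ring
end
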